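/- Let N ≥ 5 and let v_{ij} = |ξ_{ij}⟩⟨ξ_{ij}| ∈ M_N(ℂ) be the flat magic unitary built from the magic basis ξ above. Then v_{ij} and v_{kl} commute if and only if i = k or j = l. -/

import Mathlib

open Complex Matrix

/-- `ω = exp(2πi/N)`. -/
noncomputable def omegaN (N : ℕ) : ℂ := Complex.exp (2 * Real.pi * Complex.I / N)

/-- The vector `ξ_{ij} ∈ ℂ^N`: coordinate `p` (for `p = 1, …, N`, encoded as `p : Fin N`
with value `p+1`) is `ω^{1-j}/√N` if `p = 1`, `ω^{i-1}/√N` if `p = N`,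
and `ω^{p(i-j)}/√N` otherwise. -/
noncomputable def xiVec (N : ℕ) (i j : ℤ) : EuclideanSpace ℂ (Fin N) :=
  WithLp.toLp 2 fun (p : Fin N) =>
    if (p : ℕ) = 0 then omegaN N ^ (1 - j) / (Real.sqrt N : ℂ)
    else if (p : ℕ) = N - 1 then omegaN N ^ (i - 1) / (Real.sqrt N : ℂ)
    else omegaN N ^ ((((p : ℕ) : ℤ) + 1) * (i - j)) / (Real.sqrt N : ℂ)

/-- The matrix of the rank-one projection `|ξ_{ij}⟩⟨ξ_{ij}|` onto the span of `ξ_{ij}`: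
`(v_{ij})_{pq} = ξ_{ij}(p) ⋅ conj (ξ_{ij}(q))`, so that `v_{ij} x = ⟨ξ_{ij}, x⟩ ξ_{ij}`. -/
noncomputable def flatV (N : ℕ) (i j : Fin N) : Matrix (Fin N) (Fin N) ℂ :=
  Matrix.of fun p q =>
    xiVec N (((i : ℕ) : ℤ) + 1) (((j : ℕ) : ℤ) + 1) p *
      (starRingEnd ℂ) (xiVec N (((i : ℕ) : ℤ) + 1) (((j : ℕ) : ℤ) + 1) q)

section Aux

lemma omegaN_ne_zero (N : ℕ) : omegaN N ≠ 0 := Complex.exp_ne_zero _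

lemma omegaN_prim (N : ℕ) (hN : N ≠ 0) : IsPrimitiveRoot (omegaN N) N :=
  Complex.isPrimitiveRoot_exp N hN

lemma omegaN_zpow_eq_one_iff (N : ℕ) (hN : N ≠ 0) (m : ℤ) :
    omegaN N ^ m = 1 ↔ (N : ℤ) ∣ m := (omegaN_prim N hN).zpow_eq_one_iff_dvd m

lemma omegaN_pow_nat (N : ℕ) (hN : N ≠ 0) : omegaN N ^ (N : ℕ) = 1 :=
  (omegaN_prim N hN).pow_eq_one

lemma conj_omegaN (N : ℕ) : (starRingEnd ℂ) (omegaN N) = (omegaN N)⁻¹ := by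
  rw [omegaN, ← Complex.exp_conj, ← Complex.exp_neg]
  congr 1
  rw [map_div₀, _root_.map_mul, _root_.map_mul, Complex.conj_I, Complex.conj_ofReal,
    Complex.conj_natCast, map_ofNat]
  ring

lemma conj_omegaN_zpow (N : ℕ) (m : ℤ) :
    (starRingEnd ℂ) (omegaN N ^ m) = omegaN N ^ (-m) := by
  rw [map_zpow₀, conj_omegaN, _root_.inv_zpow, ← _root_.zpow_neg]

lemma abs_omegaN (N : ℕ) : ‖omegaN N‖ = 1 := by
  rw [omegaN, Complex.norm_exp]
  norm_num [Complex.div_re, Complex.mul_re, Complex.mul_im]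

lemma re_omegaN_zpow_ge (N : ℕ) (m : ℤ) : -1 ≤ (omegaN N ^ m).re := by
  have h1 : ‖omegaN N ^ m‖ = 1 := by
    rw [norm_zpow, abs_omegaN, _root_.one_zpow]
  have h2 := Complex.abs_re_le_norm (omegaN N ^ m)
  rw [h1] at h2
  have := abs_le.mp h2
  linarith [this.1]

lemma omegaN_zpow_dvd (N : ℕ) (hN : N ≠ 0) {x y : ℤ} (h : omegaN N ^ x = omegaN N ^ y) :
    (N : ℤ) ∣ (x - y) := by
  rw [← omegaN_zpow_eq_one_iff N hN]
  rw [zpow_sub₀ (omegaN_ne_zero N), h, div_self (zpow_ne_zero _ (omegaN_ne_zero N))]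

lemma fin_eq_of_dvd {N : ℕ} {a b : Fin N} (h : (N : ℤ) ∣ (((a : ℕ) : ℤ) - ((b : ℕ) : ℤ))) :
    a = b := by
  obtain ⟨t, ht⟩ := h
  have ha := a.isLt
  have hb := b.isLt
  have hN : (0 : ℤ) < N := by exact_mod_cast a.pos
  have h1 : (N : ℤ) * t < N * 1 := by rw [← ht]; omega
  have h2 : (N : ℤ) * (-1) < N * t := by rw [← ht] at *; omega
  have ht1 : t < 1 := lt_of_mul_lt_mul_left h1 (le_of_lt hN)
  have ht2 : -1 < t := lt_of_mul_lt_mul_left h2 (le_of_lt hN)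
  have : t = 0 := by omega
  subst this
  apply Fin.ext
  omega

lemma not_dvd_of_ne {N : ℕ} {a b : Fin N} (h : a ≠ b) :
    ¬ (N : ℤ) ∣ (((a : ℕ) : ℤ) - ((b : ℕ) : ℤ)) := fun hd => h (fin_eq_of_dvd hd)

variable {N : ℕ}

lemma sqrtN_ne_zero (hN : 5 ≤ N) : ((Real.sqrt N : ℝ) : ℂ) ≠ 0 := by
  rw [Complex.ofReal_ne_zero]
  exact ne_of_gt (Real.sqrt_pos.mpr (by exact_mod_cast (by omega : 0 < N)))

lemma sqrtN_mul_self (hN : 5 ≤ N) :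
    ((Real.sqrt N : ℝ) : ℂ) * ((Real.sqrt N : ℝ) : ℂ) = (N : ℂ) := by
  rw [← Complex.ofReal_mul, Real.mul_self_sqrt (by positivity)]
  norm_cast

lemma conj_sqrtN : (starRingEnd ℂ) ((Real.sqrt N : ℝ) : ℂ) = ((Real.sqrt N : ℝ) : ℂ) :=
  Complex.conj_ofReal _

lemma xiVec_ne_zero (hN : 5 ≤ N) (I J : ℤ) (p : Fin N) : xiVec N I J p ≠ 0 := by
  unfold xiVec
  simp only [PiLp.toLp_apply]
  split_ifs <;>
    exact div_ne_zero (zpow_ne_zero _ (omegaN_ne_zero N)) (sqrtN_ne_zero hN)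

lemma xiVec_zero (hN : 5 ≤ N) (I J : ℤ) :
    xiVec N I J ⟨0, by omega⟩ = omegaN N ^ (1 - J) / (Real.sqrt N : ℂ) := by
  simp [xiVec]

lemma xiVec_one (hN : 5 ≤ N) (I J : ℤ) :
    xiVec N I J ⟨1, by omega⟩ = omegaN N ^ (2 * (I - J)) / (Real.sqrt N : ℂ) := by
  have h1 : (1 : ℕ) ≠ 0 := one_ne_zero
  have h2 : (1 : ℕ) ≠ N - 1 := by omega
  simp only [xiVec, PiLp.toLp_apply]
  rw [if_neg, if_neg]
  · norm_num
  · exact h2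
  · exact h1

lemma xiVec_two (hN : 5 ≤ N) (I J : ℤ) :
    xiVec N I J ⟨2, by omega⟩ = omegaN N ^ (3 * (I - J)) / (Real.sqrt N : ℂ) := by
  have h2 : (2 : ℕ) ≠ N - 1 := by omega
  simp only [xiVec, PiLp.toLp_apply]
  rw [if_neg, if_neg]
  · norm_num
  · exact h2
  · omega

end Aux

noncomputable def cval (N : ℕ) (I J K L : ℤ) : ℂ :=
  ∑ r : Fin N, (starRingEnd ℂ) (xiVec N I J r) * xiVec N K L r

lemma flatV_mul_apply (N : ℕ) (i j k l : Fin N) (p q : Fin N) :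
    (flatV N i j * flatV N k l) p q =
      cval N (((i : ℕ) : ℤ) + 1) (((j : ℕ) : ℤ) + 1) (((k : ℕ) : ℤ) + 1) (((l : ℕ) : ℤ) + 1) *
        (xiVec N (((i : ℕ) : ℤ) + 1) (((j : ℕ) : ℤ) + 1) p *
          (starRingEnd ℂ) (xiVec N (((k : ℕ) : ℤ) + 1) (((l : ℕ) : ℤ) + 1) q)) := by
  rw [Matrix.mul_apply]
  simp only [flatV, Matrix.of_apply, cval]
  rw [Finset.sum_mul]
  exact Finset.sum_congr rfl fun r _ => by ring

lemma cval_conj (N : ℕ) (I J K L : ℤ) :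
    cval N K L I J = (starRingEnd ℂ) (cval N I J K L) := by
  rw [cval, cval, map_sum]
  exact Finset.sum_congr rfl fun r _ => by rw [_root_.map_mul, Complex.conj_conj]; ring

lemma cval_eq (N : ℕ) (hN : 5 ≤ N) (I J K L : ℤ) :
    (N : ℂ) * cval N I J K L =
      omegaN N ^ (J - L) + omegaN N ^ (K - I) - omegaN N ^ ((K - L) - (I - J)) - 1 +
        (if omegaN N ^ ((K - L) - (I - J)) = 1 then (N : ℂ) else 0) := by
  set ζ := omegaN N with hζdef
  have hζ0 : ζ ≠ 0 := omegaN_ne_zero N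
  set d : ℤ := (K - L) - (I - J) with hd
  have hNz : N ≠ 0 := by omega
  have hpowN' : (ζ ^ d) ^ (N : ℕ) = 1 := by
    rw [← zpow_natCast (ζ ^ d) N, ← _root_.zpow_mul, mul_comm, _root_.zpow_mul, zpow_natCast,
      omegaN_pow_nat N hNz, _root_.one_zpow]
  have hpowN : ζ ^ d * (ζ ^ d) ^ (N - 1 : ℕ) = 1 := by
    rw [← _root_.pow_succ' (ζ ^ d) (N - 1)]
    rw [show N - 1 + 1 = N by omega]
    exact hpowN'
  have hs0 := sqrtN_ne_zero (N := N) hN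
  have hNC : (N : ℂ) ≠ 0 := by exact_mod_cast hNz
  have hkey : ∀ x y : ℤ,
      (N : ℂ) * ((starRingEnd ℂ) (ζ ^ x / (Real.sqrt N : ℂ)) * (ζ ^ y / (Real.sqrt N : ℂ)))
        = ζ ^ (y - x) := by
    intro x y
    rw [map_div₀, conj_omegaN_zpow, conj_sqrtN, div_mul_div_comm, ← zpow_add₀ hζ0,
      sqrtN_mul_self hN, mul_comm, div_mul_cancel₀ _ hNC]
    congr 1
    ring
  have h0mem : 0 < N := by omega
  have hN1mem : N - 1 < N := by omega
  have hterm : ∀ r : Fin N,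
      (N : ℂ) * ((starRingEnd ℂ) (xiVec N I J r) * xiVec N K L r) =
        ζ ^ d * (ζ ^ d) ^ (r : ℕ)
          + (if r = (⟨0, h0mem⟩ : Fin N) then ζ ^ (J - L) - ζ ^ d else 0)
          + (if r = (⟨N - 1, hN1mem⟩ : Fin N) then ζ ^ (K - I) - 1 else 0) := by
    intro r
    by_cases h0 : (r : ℕ) = 0
    · have hr : r = (⟨0, h0mem⟩ : Fin N) := Fin.ext h0
      have hne : r ≠ (⟨N - 1, hN1mem⟩ : Fin N) := by
        rw [hr]; intro hcon
        have := Fin.mk.injEq 0 h0mem (N - 1) hN1mem ▸ hcon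
        omega
      rw [if_pos hr, if_neg hne]
      have e1 : xiVec N I J r = ζ ^ (1 - J) / (Real.sqrt N : ℂ) := by
        simp only [xiVec, PiLp.toLp_apply]; rw [if_pos h0]
      have e2 : xiVec N K L r = ζ ^ (1 - L) / (Real.sqrt N : ℂ) := by
        simp only [xiVec, PiLp.toLp_apply]; rw [if_pos h0]
      rw [e1, e2, hkey, hr]
      simp only [pow_zero, mul_one, add_zero]
      rw [show (1 : ℤ) - L - (1 - J) = J - L by ring]
      ring
    · by_cases hlast : (r : ℕ) = N - 1
      · have hr : r = (⟨N - 1, hN1mem⟩ : Fin N) := Fin.ext hlast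
        have hne : r ≠ (⟨0, h0mem⟩ : Fin N) := by
          rw [hr]; intro hcon
          have := Fin.mk.injEq (N - 1) hN1mem 0 h0mem ▸ hcon
          omega
        rw [if_neg hne, if_pos hr]
        have e1 : xiVec N I J r = ζ ^ (I - 1) / (Real.sqrt N : ℂ) := by
          simp only [xiVec, PiLp.toLp_apply]; rw [if_neg h0, if_pos hlast]
        have e2 : xiVec N K L r = ζ ^ (K - 1) / (Real.sqrt N : ℂ) := by
          simp only [xiVec, PiLp.toLp_apply]; rw [if_neg h0, if_pos hlast]
        rw [e1, e2, hkey, hr]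
        simp only [add_zero]
        rw [hpowN]
        rw [show K - 1 - (I - 1) = K - I by ring]
        ring
      · have hne0 : r ≠ (⟨0, h0mem⟩ : Fin N) := fun hcon => h0 (by rw [hcon])
        have hnel : r ≠ (⟨N - 1, hN1mem⟩ : Fin N) := fun hcon => hlast (by rw [hcon])
        rw [if_neg hne0, if_neg hnel]
        have e1 : xiVec N I J r
            = ζ ^ ((((r : ℕ) : ℤ) + 1) * (I - J)) / (Real.sqrt N : ℂ) := by
          simp only [xiVec, PiLp.toLp_apply]; rw [if_neg h0, if_neg hlast]
        have e2 : xiVec N K L r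
            = ζ ^ ((((r : ℕ) : ℤ) + 1) * (K - L)) / (Real.sqrt N : ℂ) := by
          simp only [xiVec, PiLp.toLp_apply]; rw [if_neg h0, if_neg hlast]
        rw [e1, e2, hkey]
        rw [← zpow_natCast (ζ ^ d) (r : ℕ), ← _root_.zpow_mul, ← zpow_add₀ hζ0]
        simp only [add_zero]
        congr 1
        ring
  rw [show (N : ℂ) * cval N I J K L
      = ∑ r : Fin N, (N : ℂ) * ((starRingEnd ℂ) (xiVec N I J r) * xiVec N K L r) by
    rw [cval, Finset.mul_sum]]
  rw [Finset.sum_congr rfl fun r _ => hterm r]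
  rw [Finset.sum_add_distrib, Finset.sum_add_distrib]
  rw [Finset.sum_ite_eq' Finset.univ (⟨0, h0mem⟩ : Fin N) fun _ => ζ ^ (J - L) - ζ ^ d]
  rw [Finset.sum_ite_eq' Finset.univ (⟨N - 1, hN1mem⟩ : Fin N) fun _ => ζ ^ (K - I) - 1]
  rw [if_pos (Finset.mem_univ _), if_pos (Finset.mem_univ _)]
  rw [← Finset.mul_sum]
  rw [Fin.sum_univ_eq_sum_range (fun n => (ζ ^ d) ^ n) N]
  by_cases hone : ζ ^ d = 1
  · rw [if_pos hone, hone]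
    simp only [one_pow, Finset.sum_const, Finset.card_range, nsmul_eq_mul, mul_one]
    ring
  · rw [if_neg hone, geom_sum_eq hone N, hpowN', sub_self, zero_div, mul_zero]
    ring


lemma cval_left_eq_zero {N : ℕ} (hN : 5 ≤ N) (i j l : Fin N) (hjl : j ≠ l) :
    cval N (((i : ℕ) : ℤ) + 1) (((j : ℕ) : ℤ) + 1) (((i : ℕ) : ℤ) + 1) (((l : ℕ) : ℤ) + 1)
      = 0 := by
  have hNz : N ≠ 0 := by omega
  have h := cval_eq N hN (((i : ℕ) : ℤ) + 1) (((j : ℕ) : ℤ) + 1) (((i : ℕ) : ℤ) + 1)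
    (((l : ℕ) : ℤ) + 1)
  rw [show (((j : ℕ) : ℤ) + 1) - (((l : ℕ) : ℤ) + 1) = ((j : ℕ) : ℤ) - ((l : ℕ) : ℤ) by ring,
    show (((i : ℕ) : ℤ) + 1) - (((i : ℕ) : ℤ) + 1) = 0 by ring,
    show ((((i : ℕ) : ℤ) + 1) - (((l : ℕ) : ℤ) + 1)) - ((((i : ℕ) : ℤ) + 1) - (((j : ℕ) : ℤ) + 1))
      = ((j : ℕ) : ℤ) - ((l : ℕ) : ℤ) by ring, zpow_zero,
    if_neg (fun hc => not_dvd_of_ne hjl ((omegaN_zpow_eq_one_iff N hNz _).mp hc))] at h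
  have h2 : (N : ℂ) * cval N (((i : ℕ) : ℤ) + 1) (((j : ℕ) : ℤ) + 1) (((i : ℕ) : ℤ) + 1)
      (((l : ℕ) : ℤ) + 1) = 0 := by rw [h]; ring
  rcases mul_eq_zero.mp h2 with h' | h'
  · exact absurd h' (by exact_mod_cast hNz)
  · exact h'

lemma cval_right_eq_zero {N : ℕ} (hN : 5 ≤ N) (i j k : Fin N) (hik : i ≠ k) :
    cval N (((i : ℕ) : ℤ) + 1) (((j : ℕ) : ℤ) + 1) (((k : ℕ) : ℤ) + 1) (((j : ℕ) : ℤ) + 1)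
      = 0 := by
  have hNz : N ≠ 0 := by omega
  have h := cval_eq N hN (((i : ℕ) : ℤ) + 1) (((j : ℕ) : ℤ) + 1) (((k : ℕ) : ℤ) + 1)
    (((j : ℕ) : ℤ) + 1)
  rw [show (((j : ℕ) : ℤ) + 1) - (((j : ℕ) : ℤ) + 1) = 0 by ring,
    show (((k : ℕ) : ℤ) + 1) - (((i : ℕ) : ℤ) + 1) = ((k : ℕ) : ℤ) - ((i : ℕ) : ℤ) by ring,
    show ((((k : ℕ) : ℤ) + 1) - (((j : ℕ) : ℤ) + 1)) - ((((i : ℕ) : ℤ) + 1) - (((j : ℕ) : ℤ) + 1))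
      = ((k : ℕ) : ℤ) - ((i : ℕ) : ℤ) by ring, zpow_zero,
    if_neg (fun hc => not_dvd_of_ne hik.symm ((omegaN_zpow_eq_one_iff N hNz _).mp hc))] at h
  have h2 : (N : ℂ) * cval N (((i : ℕ) : ℤ) + 1) (((j : ℕ) : ℤ) + 1) (((k : ℕ) : ℤ) + 1)
      (((j : ℕ) : ℤ) + 1) = 0 := by rw [h]; ring
  rcases mul_eq_zero.mp h2 with h' | h'
  · exact absurd h' (by exact_mod_cast hNz)
  · exact h'

lemma cval_ne_zero {N : ℕ} (hN : 5 ≤ N) (i j k l : Fin N) (hik : i ≠ k) (hjl : j ≠ l) :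
    cval N (((i : ℕ) : ℤ) + 1) (((j : ℕ) : ℤ) + 1) (((k : ℕ) : ℤ) + 1) (((l : ℕ) : ℤ) + 1)
      ≠ 0 := by
  have hNz : N ≠ 0 := by omega
  have hζ0 : omegaN N ≠ 0 := omegaN_ne_zero N
  intro hc
  have h := cval_eq N hN (((i : ℕ) : ℤ) + 1) (((j : ℕ) : ℤ) + 1) (((k : ℕ) : ℤ) + 1)
    (((l : ℕ) : ℤ) + 1)
  rw [show (((j : ℕ) : ℤ) + 1) - (((l : ℕ) : ℤ) + 1) = ((j : ℕ) : ℤ) - ((l : ℕ) : ℤ) by ring,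
    show (((k : ℕ) : ℤ) + 1) - (((i : ℕ) : ℤ) + 1) = ((k : ℕ) : ℤ) - ((i : ℕ) : ℤ) by ring,
    show ((((k : ℕ) : ℤ) + 1) - (((l : ℕ) : ℤ) + 1)) - ((((i : ℕ) : ℤ) + 1) - (((j : ℕ) : ℤ) + 1))
      = (((j : ℕ) : ℤ) - ((l : ℕ) : ℤ)) + (((k : ℕ) : ℤ) - ((i : ℕ) : ℤ)) by ring,
    hc, mul_zero] at h
  by_cases hone : omegaN N ^ ((((j : ℕ) : ℤ) - ((l : ℕ) : ℤ)) + (((k : ℕ) : ℤ) - ((i : ℕ) : ℤ)))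
      = 1
  · rw [if_pos hone, hone] at h
    have hki : omegaN N ^ (((k : ℕ) : ℤ) - ((i : ℕ) : ℤ))
        = (starRingEnd ℂ) (omegaN N ^ (((j : ℕ) : ℤ) - ((l : ℕ) : ℤ))) := by
      rw [conj_omegaN_zpow,
        show ((k : ℕ) : ℤ) - ((i : ℕ) : ℤ)
          = ((((j : ℕ) : ℤ) - ((l : ℕ) : ℤ)) + (((k : ℕ) : ℤ) - ((i : ℕ) : ℤ)))
            + -(((j : ℕ) : ℤ) - ((l : ℕ) : ℤ)) by ring,
        zpow_add₀ hζ0, hone, one_mul]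
    rw [hki, Complex.add_conj] at h
    have hre := congrArg Complex.re h
    simp only [Complex.zero_re, Complex.add_re, Complex.sub_re, Complex.ofReal_re,
      Complex.one_re, Complex.natCast_re] at hre
    have hge := re_omegaN_zpow_ge N (((j : ℕ) : ℤ) - ((l : ℕ) : ℤ))
    have hN5 : (5 : ℝ) ≤ (N : ℝ) := by exact_mod_cast hN
    linarith
  · rw [if_neg hone, zpow_add₀ hζ0] at h
    have h1 : omegaN N ^ (((j : ℕ) : ℤ) - ((l : ℕ) : ℤ)) ≠ 1 :=
      fun hc' => not_dvd_of_ne hjl ((omegaN_zpow_eq_one_iff N hNz _).mp hc')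
    have h2 : omegaN N ^ (((k : ℕ) : ℤ) - ((i : ℕ) : ℤ)) ≠ 1 :=
      fun hc' => not_dvd_of_ne hik.symm ((omegaN_zpow_eq_one_iff N hNz _).mp hc')
    have h3 : (omegaN N ^ (((j : ℕ) : ℤ) - ((l : ℕ) : ℤ)) - 1)
        * (omegaN N ^ (((k : ℕ) : ℤ) - ((i : ℕ) : ℤ)) - 1) = 0 := by linear_combination h
    rcases mul_eq_zero.mp h3 with h' | h'
    · exact h1 (sub_eq_zero.mp h')
    · exact h2 (sub_eq_zero.mp h')

theorem flatV_commute_iff (N : ℕ) (hN : 5 ≤ N) (i j k l : Fin N) :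
    Commute (flatV N i j) (flatV N k l) ↔ i = k ∨ j = l := by
  have hNz : N ≠ 0 := by omega
  have hζ0 : omegaN N ≠ 0 := omegaN_ne_zero N
  have hs0 := sqrtN_ne_zero (N := N) hN
  constructor
  · intro hcom
    by_contra hne
    push_neg at hne
    obtain ⟨hik, hjl⟩ := hne
    set I : ℤ := ((i : ℕ) : ℤ) + 1 with hI
    set J : ℤ := ((j : ℕ) : ℤ) + 1 with hJ
    set K : ℤ := ((k : ℕ) : ℤ) + 1 with hK
    set L : ℤ := ((l : ℕ) : ℤ) + 1 with hL
    have hc0 : cval N I J K L ≠ 0 := cval_ne_zero hN i j k l hik hjl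
    have hcomm0 : ∀ p q : Fin N,
        cval N I J K L * (xiVec N I J p * (starRingEnd ℂ) (xiVec N K L q))
          = (starRingEnd ℂ) (cval N I J K L)
              * (xiVec N K L p * (starRingEnd ℂ) (xiVec N I J q)) := by
      intro p q
      have hpq := Matrix.ext_iff.mpr hcom p q
      rwa [flatV_mul_apply N i j k l p q, flatV_mul_apply N k l i j p q,
        cval_conj N I J K L] at hpq
    have hE : ∀ p : Fin N,
        (cval N I J K L * (starRingEnd ℂ) (xiVec N K L ⟨0, by omega⟩)) * xiVec N I J p
          = ((starRingEnd ℂ) (cval N I J K L)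
              * (starRingEnd ℂ) (xiVec N I J ⟨0, by omega⟩)) * xiVec N K L p :=
      fun p => by linear_combination hcomm0 p ⟨0, by omega⟩
    set α : ℂ := cval N I J K L * (starRingEnd ℂ) (xiVec N K L ⟨0, by omega⟩) with hαdef
    set β : ℂ := (starRingEnd ℂ) (cval N I J K L)
      * (starRingEnd ℂ) (xiVec N I J ⟨0, by omega⟩) with hβdef
    have hα : α ≠ 0 := mul_ne_zero hc0 (fun h => xiVec_ne_zero hN K L ⟨0, by omega⟩
      (by rwa [starRingEnd_apply, star_eq_zero] at h))
    have hβ : β ≠ 0 := mul_ne_zero (fun h => hc0 (by rwa [starRingEnd_apply, star_eq_zero] at h))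
      (fun h => xiVec_ne_zero hN I J ⟨0, by omega⟩
        (by rwa [starRingEnd_apply, star_eq_zero] at h))
    have hcan : ∀ a b : ℂ, ∀ x y : ℤ,
        a * (omegaN N ^ x / (Real.sqrt N : ℂ)) = b * (omegaN N ^ y / (Real.sqrt N : ℂ)) →
          a * omegaN N ^ x = b * omegaN N ^ y := by
      intro a b x y h
      field_simp at h
      linear_combination h
    have E0 : α * omegaN N ^ (1 - J) = β * omegaN N ^ (1 - L) := by
      have h := hE ⟨0, by omega⟩
      rw [xiVec_zero hN I J, xiVec_zero hN K L] at h
      exact hcan _ _ _ _ h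
    have E1 : α * omegaN N ^ (2 * (I - J)) = β * omegaN N ^ (2 * (K - L)) := by
      have h := hE ⟨1, by omega⟩
      rw [xiVec_one hN I J, xiVec_one hN K L] at h
      exact hcan _ _ _ _ h
    have E2 : α * omegaN N ^ (3 * (I - J)) = β * omegaN N ^ (3 * (K - L)) := by
      have h := hE ⟨2, by omega⟩
      rw [xiVec_two hN I J, xiVec_two hN K L] at h
      exact hcan _ _ _ _ h
    have h3 : β * omegaN N ^ (2 * (K - L)) * omegaN N ^ (I - J)
        = β * omegaN N ^ (2 * (K - L)) * omegaN N ^ (K - L) := by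
      calc β * omegaN N ^ (2 * (K - L)) * omegaN N ^ (I - J)
          = α * omegaN N ^ (2 * (I - J)) * omegaN N ^ (I - J) := by rw [E1]
        _ = α * omegaN N ^ (3 * (I - J)) := by
            have hz : omegaN N ^ (3 * (I - J))
                = omegaN N ^ (2 * (I - J)) * omegaN N ^ (I - J) := by
              rw [← zpow_add₀ hζ0]; congr 1; ring
            rw [hz]; ring
        _ = β * omegaN N ^ (3 * (K - L)) := E2
        _ = β * omegaN N ^ (2 * (K - L)) * omegaN N ^ (K - L) := by
            have hz : omegaN N ^ (3 * (K - L))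
                = omegaN N ^ (2 * (K - L)) * omegaN N ^ (K - L) := by
              rw [← zpow_add₀ hζ0]; congr 1; ring
            rw [hz]; ring
    have h4 : omegaN N ^ (I - J) = omegaN N ^ (K - L) :=
      mul_left_cancel₀ (mul_ne_zero hβ (zpow_ne_zero _ hζ0)) h3
    have h5 : α = β := by
      have hsq : omegaN N ^ (2 * (K - L)) = omegaN N ^ (2 * (I - J)) := by
        rw [show (2 : ℤ) * (K - L) = (K - L) + (K - L) by ring,
          show (2 : ℤ) * (I - J) = (I - J) + (I - J) by ring,
          zpow_add₀ hζ0, zpow_add₀ hζ0, h4]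
      exact mul_right_cancel₀ (zpow_ne_zero _ hζ0) (by rw [E1, hsq])
    rw [← h5] at E0
    have h6 : omegaN N ^ (1 - J) = omegaN N ^ (1 - L) := mul_left_cancel₀ hα E0
    have h7 := omegaN_zpow_dvd N hNz h6
    rw [show (1 - J) - (1 - L) = ((l : ℕ) : ℤ) - ((j : ℕ) : ℤ) by rw [hJ, hL]; ring] at h7
    exact hjl (fin_eq_of_dvd h7).symm
  · rintro (hik | hjl)
    · subst hik
      by_cases hjl : j = l
      · subst hjl; exact Commute.refl _
      · have hc := cval_left_eq_zero hN i j l hjl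
        show flatV N i j * flatV N i l = flatV N i l * flatV N i j
        ext p q
        rw [flatV_mul_apply N i j i l p q, flatV_mul_apply N i l i j p q,
          cval_conj N (((i : ℕ) : ℤ) + 1) (((j : ℕ) : ℤ) + 1) (((i : ℕ) : ℤ) + 1)
            (((l : ℕ) : ℤ) + 1),
          hc, map_zero, zero_mul, zero_mul]
    · subst hjl
      by_cases hik : i = k
      · subst hik; exact Commute.refl _
      · have hc := cval_right_eq_zero hN i j k hik
        show flatV N i j * flatV N k j = flatV N k j * flatV N i j
        ext p q
        rw [flatV_mul_apply N i j k j p q, flatV_mul_apply N k j i j p q,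
          cval_conj N (((i : ℕ) : ℤ) + 1) (((j : ℕ) : ℤ) + 1) (((k : ℕ) : ℤ) + 1)
            (((j : ℕ) : ℤ) + 1),
          hc, map_zero, zero_mul, zero_mul]
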